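/- Let (t,m) ∈ [0,T] × 𝒫₂ and M ∈ 𝓜(t,m). Then for every t' ∈ [t,T] and every bounded continuous function φ on ℝ^d, E[M_{t'}(φ)] = p^{t,m}_{t'}(φ); this identity extends to all measurable functions φ with at most quadratic growth, and in particular M_{t'} belongs to 𝒫₂ almost surely. -/

import Mathlib

open MeasureTheory Filter Set
open scoped Topology ENNReal NNReal BoundedContinuousFunction

noncomputable section

/-- Euclidean space `ℝ^d`. -/
abbrev Ed (d : ℕ) : Type := EuclideanSpace ℝ (Fin d)

/-- `m ∈ 𝒫_p` : Borel probability measure on `ℝ^d` with finite `p`-th moment. -/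
def MemP (d : ℕ) (p : ℝ) (m : Measure (Ed d)) : Prop :=
  IsProbabilityMeasure m ∧ Integrable (fun x => ‖x‖ ^ p) m

/-- `γ` is a coupling of `m` and `m'`. -/
def IsCoupling (d : ℕ) (γ : Measure (Ed d × Ed d)) (m m' : Measure (Ed d)) : Prop :=
  γ.map Prod.fst = m ∧ γ.map Prod.snd = m'

/-- The `p`-Wasserstein distance. -/
def wdist (d : ℕ) (p : ℝ) (m m' : Measure (Ed d)) : ℝ :=
  sInf { c : ℝ | ∃ γ : Measure (Ed d × Ed d), IsProbabilityMeasure γ ∧ IsCoupling d γ m m' ∧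
      c = (∫ q, ‖q.1 - q.2‖ ^ p ∂γ) ^ (1 / p) }

/-- The Gaussian kernel `ρ_δ`. -/
def gaussDensity (d : ℕ) (δ : ℝ) (x : Ed d) : ℝ :=
  (2 * Real.pi * δ) ^ (-(d : ℝ) / 2) * Real.exp (-‖x‖ ^ 2 / (2 * δ))

/-- The centered Gaussian measure with variance `δ` on `ℝ^d`. -/
def gaussMeasure (d : ℕ) (δ : ℝ) : Measure (Ed d) :=
  volume.withDensity fun x => ENNReal.ofReal (gaussDensity d δ x)

/-- The heat flow `p^{t,m}_s` : the law at time `s` of a Brownian motion started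
at time `t` with initial law `m`. -/
def heatFlow (d : ℕ) (t s : ℝ) (m : Measure (Ed d)) : Measure (Ed d) :=
  if s ≤ t then m
  else Measure.map (fun q : Ed d × Ed d => q.1 + q.2) (m.prod (gaussMeasure d (s - t)))

/-- The natural filtration of a measure-valued process, made right-continuous:
`𝓕^M_s = ⋂_{u > s} σ(M_r, r ∈ [t,u])`. -/
def genFiltration {Ω : Type} (d : ℕ) (M : ℝ → Ω → Measure (Ed d)) (t s : ℝ) :
    MeasurableSpace Ω :=
  ⨅ u ∈ Set.Ioi s, ⨆ r ∈ Set.Icc t u, MeasurableSpace.comap (M r) inferInstance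

/-- A path `[t,T] → (𝒫₁,d₁)` is càdlàg: right-continuous with left limits (for `d₁`). -/
def CadlagD1 (d : ℕ) (t T : ℝ) (g : ℝ → Measure (Ed d)) : Prop :=
  (∀ s ∈ Set.Ico t T, Tendsto (fun r => wdist d 1 (g r) (g s)) (𝓝[Set.Ici s] s) (𝓝 0)) ∧
  (∀ s ∈ Set.Ioc t T, ∃ μ : Measure (Ed d),
      Tendsto (fun r => wdist d 1 (g r) μ) (𝓝[Set.Ico t s] s) (𝓝 0))

/-- An element of `𝓜(t,m)` : a càdlàg `(𝒫₁,d₁)`-valued process `M = (M_s)_{s∈[t,T]}`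
on some probability space such that (i) `E[M_t(φ)] = m(φ)` for all bounded continuous `φ`
and (ii) `E[M_{t₂}(φ) | 𝓕^M_{t₁}] = p^{t₁,M_{t₁}}_{t₂}(φ)` for all `t ≤ t₁ ≤ t₂ ≤ T` and
all bounded continuous `φ`. -/
structure MVP (d : ℕ) (T t : ℝ) (m : Measure (Ed d)) where
  Ω : Type
  mΩ : MeasurableSpace Ω
  P : @Measure Ω mΩ
  probP : IsProbabilityMeasure P
  M : ℝ → Ω → Measure (Ed d)
  meas : ∀ s, @Measurable Ω (Measure (Ed d)) mΩ inferInstance (M s)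
  inP1 : ∀ s ∈ Set.Icc t T, ∀ ω, MemP d 1 (M s ω)
  cadlag : ∀ ω, CadlagD1 d t T (fun s => M s ω)
  init : ∀ φ : Ed d →ᵇ ℝ, ∫ ω, (∫ x, φ x ∂(M t ω)) ∂P = ∫ x, φ x ∂m
  cond : ∀ t₁ t₂ : ℝ, t ≤ t₁ → t₁ ≤ t₂ → t₂ ≤ T → ∀ φ : Ed d →ᵇ ℝ,
    P[(fun ω => ∫ x, φ x ∂(M t₂ ω)) | genFiltration d M t t₁]
      =ᵐ[P] fun ω => ∫ x, φ x ∂(heatFlow d t₁ t₂ (M t₁ ω))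

lemma integrable_gauss_exp (d : ℕ) {b : ℝ} (hb : 0 < b) :
    Integrable (fun v : Ed d => Real.exp (-b * ‖v‖ ^ 2)) := by
  have h := (GaussianFourier.integrable_cexp_neg_mul_sq_norm_add (V := Ed d) (b := (b : ℂ))
      (by simpa using hb) 0 0).norm
  convert h using 2 with v
  rw [Complex.norm_exp]
  norm_num
  left
  norm_cast

lemma gaussDensity_nonneg (d : ℕ) {δ : ℝ} (hδ : 0 < δ) (x : Ed d) :
    0 ≤ gaussDensity d δ x := by
  unfold gaussDensity; positivity

lemma gaussDensity_exp_eq (d : ℕ) {δ : ℝ} (hδ : 0 < δ) (x : Ed d) :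
    Real.exp (-‖x‖ ^ 2 / (2 * δ)) = Real.exp (-(1 / (2 * δ)) * ‖x‖ ^ 2) := by
  congr 1; field_simp

lemma gaussDensity_integrable (d : ℕ) {δ : ℝ} (hδ : 0 < δ) :
    Integrable (gaussDensity d δ) := by
  unfold gaussDensity
  refine Integrable.const_mul ?_ _
  have : (fun x : Ed d => Real.exp (-‖x‖ ^ 2 / (2 * δ)))
      = fun x : Ed d => Real.exp (-(1 / (2 * δ)) * ‖x‖ ^ 2) :=
    funext fun x => gaussDensity_exp_eq d hδ x
  rw [this]
  exact integrable_gauss_exp d (by positivity)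

lemma gaussDensity_measurable (d : ℕ) (δ : ℝ) : Measurable (gaussDensity d δ) := by
  unfold gaussDensity
  exact (measurable_const.mul (((measurable_norm.pow measurable_const).neg.div
    measurable_const).exp))

lemma gaussMeasure_fin (d : ℕ) {δ : ℝ} (hδ : 0 < δ) :
    IsFiniteMeasure (gaussMeasure d δ) := by
  constructor
  rw [gaussMeasure, withDensity_apply _ MeasurableSet.univ, Measure.restrict_univ]
  exact (gaussDensity_integrable d hδ).lintegral_lt_top

lemma gaussMeasure_moment (d : ℕ) {δ : ℝ} (hδ : 0 < δ) :
    ∫⁻ x, ENNReal.ofReal (‖x‖ ^ 2) ∂(gaussMeasure d δ) < ∞ := by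
  rw [gaussMeasure, lintegral_withDensity_eq_lintegral_mul _
    ((gaussDensity_measurable d δ).ennreal_ofReal)
    (measurable_norm.pow measurable_const).ennreal_ofReal]
  have hbd : ∀ x : Ed d, gaussDensity d δ x * ‖x‖ ^ 2
      ≤ ((2 * Real.pi * δ) ^ (-(d : ℝ) / 2) * (4 * δ)) *
        Real.exp (-(1 / (4 * δ)) * ‖x‖ ^ 2) := by
    intro x
    unfold gaussDensity
    have hc : (0:ℝ) ≤ (2 * Real.pi * δ) ^ (-(d : ℝ) / 2) := by positivity
    have main : Real.exp (-‖x‖ ^ 2 / (2 * δ)) * ‖x‖ ^ 2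
        ≤ (4 * δ) * Real.exp (-(1 / (4 * δ)) * ‖x‖ ^ 2) := by
      have h1 : ‖x‖ ^ 2 ≤ 4 * δ * Real.exp (‖x‖ ^ 2 / (4 * δ)) := by
        have h2 : ‖x‖ ^ 2 / (4 * δ) ≤ Real.exp (‖x‖ ^ 2 / (4 * δ)) := by
          have h3 := Real.add_one_le_exp (‖x‖ ^ 2 / (4 * δ))
          linarith
        calc ‖x‖ ^ 2 = 4 * δ * (‖x‖ ^ 2 / (4 * δ)) := by field_simp
          _ ≤ 4 * δ * Real.exp (‖x‖ ^ 2 / (4 * δ)) :=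
              mul_le_mul_of_nonneg_left h2 (by positivity)
      calc Real.exp (-‖x‖ ^ 2 / (2 * δ)) * ‖x‖ ^ 2
          ≤ Real.exp (-‖x‖ ^ 2 / (2 * δ)) * (4 * δ * Real.exp (‖x‖ ^ 2 / (4 * δ))) :=
            mul_le_mul_of_nonneg_left h1 (Real.exp_nonneg _)
        _ = 4 * δ * (Real.exp (-‖x‖ ^ 2 / (2 * δ)) * Real.exp (‖x‖ ^ 2 / (4 * δ))) := by ring
        _ = 4 * δ * Real.exp (-(1 / (4 * δ)) * ‖x‖ ^ 2) := by
            rw [← Real.exp_add]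
            congr 2
            field_simp
            ring
    calc (2 * Real.pi * δ) ^ (-(d : ℝ) / 2) * Real.exp (-‖x‖ ^ 2 / (2 * δ)) * ‖x‖ ^ 2
        = (2 * Real.pi * δ) ^ (-(d : ℝ) / 2) * (Real.exp (-‖x‖ ^ 2 / (2 * δ)) * ‖x‖ ^ 2) := by
          ring
      _ ≤ (2 * Real.pi * δ) ^ (-(d : ℝ) / 2) * ((4 * δ) * Real.exp (-(1 / (4 * δ)) * ‖x‖ ^ 2)) :=
          mul_le_mul_of_nonneg_left main hc
      _ = (2 * Real.pi * δ) ^ (-(d : ℝ) / 2) * (4 * δ) * Real.exp (-(1 / (4 * δ)) * ‖x‖ ^ 2) := by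
          ring
  have hfin : ∫⁻ x : Ed d, ENNReal.ofReal (((2 * Real.pi * δ) ^ (-(d : ℝ) / 2) * (4 * δ)) *
      Real.exp (-(1 / (4 * δ)) * ‖x‖ ^ 2)) ∂volume < ∞ :=
    ((integrable_gauss_exp d (by positivity : (0:ℝ) < 1/(4*δ))).const_mul _).lintegral_lt_top
  refine lt_of_le_of_lt (lintegral_mono fun x => ?_) hfin
  simp only [Pi.mul_apply]
  rw [← ENNReal.ofReal_mul (gaussDensity_nonneg d hδ x)]
  exact ENNReal.ofReal_le_ofReal (hbd x)

lemma measurable_integral_meas {d : ℕ} {Ω : Type} [MeasurableSpace Ω]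
    {K : Ω → Measure (Ed d)} (hK : Measurable K) {g : Ed d → ℝ} (hg : Measurable g)
    (hint : ∀ ω, Integrable g (K ω)) :
    Measurable fun ω => ∫ x, g x ∂(K ω) := by
  have h : (fun ω => ∫ x, g x ∂(K ω)) = fun ω =>
      (∫⁻ x, ENNReal.ofReal (g x) ∂(K ω)).toReal
        - (∫⁻ x, ENNReal.ofReal (-g x) ∂(K ω)).toReal :=
    funext fun ω => integral_eq_lintegral_pos_part_sub_lintegral_neg_part (hint ω)
  rw [h]
  exact (((Measure.measurable_lintegral hg.ennreal_ofReal).comp hK).ennreal_toReal).sub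
    (((Measure.measurable_lintegral hg.neg.ennreal_ofReal).comp hK).ennreal_toReal)

lemma heatFlow_integral_bcf {d : ℕ} {t t' : ℝ} (h : t < t') (κ : Measure (Ed d))
    [IsProbabilityMeasure κ] (φ : Ed d →ᵇ ℝ) :
    ∫ x, φ x ∂(heatFlow d t t' κ)
      = ∫ x, ∫ y, φ (x + y) ∂(gaussMeasure d (t' - t)) ∂κ := by
  haveI := gaussMeasure_fin d (sub_pos.2 h)
  rw [heatFlow, if_neg (not_le.2 h)]
  rw [integral_map (φ := fun q : Ed d × Ed d => q.1 + q.2) (measurable_fst.add measurable_snd).aemeasurable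
    φ.continuous.aestronglyMeasurable]
  exact integral_prod _ ⟨(φ.continuous.comp (continuous_fst.add continuous_snd)).aestronglyMeasurable,
    HasFiniteIntegral.of_bounded (C := ‖φ‖) (ae_of_all _ fun q => φ.norm_coe_le_norm _)⟩

lemma exists_smooth_bcf {d : ℕ} {δ : ℝ} (hδ : 0 < δ) (φ : Ed d →ᵇ ℝ) :
    ∃ ψ : Ed d →ᵇ ℝ, ∀ x, ψ x = ∫ y, φ (x + y) ∂(gaussMeasure d δ) := by
  haveI := gaussMeasure_fin d hδ
  set γ := gaussMeasure d δ
  have hcont : Continuous fun x : Ed d => ∫ y, φ (x + y) ∂γ := by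
    refine continuous_of_dominated (bound := fun _ => ‖φ‖) ?_ ?_ (integrable_const _) ?_
    · exact fun x => (φ.continuous.comp (continuous_const.add continuous_id)).aestronglyMeasurable
    · exact fun x => ae_of_all _ fun y => φ.norm_coe_le_norm _
    · exact ae_of_all _ fun y => φ.continuous.comp (continuous_id.add continuous_const)
  refine ⟨BoundedContinuousFunction.ofNormedAddCommGroup _ hcont
    (‖φ‖ * (γ Set.univ).toReal) (fun x => ?_), fun x => rfl⟩
  exact norm_integral_le_of_norm_le_const (ae_of_all _ fun y => φ.norm_coe_le_norm _)

lemma integral_bind_real {d : ℕ} {Ω : Type} [MeasurableSpace Ω] (P : Measure Ω)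
    [IsProbabilityMeasure P] {K : Ω → Measure (Ed d)} (hK : Measurable K)
    {φ : Ed d → ℝ} (hφ : Measurable φ)
    (hfin : ∫⁻ x, (‖φ x‖₊ : ℝ≥0∞) ∂(P.bind K) < ∞) :
    ∫ ω, ∫ x, φ x ∂(K ω) ∂P = ∫ x, φ x ∂(P.bind K) := by
  have hφi : Integrable φ (P.bind K) := ⟨hφ.aestronglyMeasurable, hfin⟩
  have hFn : ∫⁻ ω, ∫⁻ x, (‖φ x‖₊ : ℝ≥0∞) ∂(K ω) ∂P < ∞ := by
    rwa [← Measure.lintegral_bind hK.aemeasurable hφ.nnnorm.coe_nnreal_ennreal.aemeasurable]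
  have hFmeas : Measurable fun ω => ∫⁻ x, (‖φ x‖₊ : ℝ≥0∞) ∂(K ω) :=
    (Measure.measurable_lintegral hφ.nnnorm.coe_nnreal_ennreal).comp hK
  have haeF : ∀ᵐ ω ∂P, ∫⁻ x, (‖φ x‖₊ : ℝ≥0∞) ∂(K ω) < ∞ :=
    ae_lt_top hFmeas hFn.ne
  have haei : ∀ᵐ ω ∂P, Integrable φ (K ω) :=
    haeF.mono fun ω hω => ⟨hφ.aestronglyMeasurable, hω⟩
  set A : Ω → ℝ≥0∞ := fun ω => ∫⁻ x, ENNReal.ofReal (φ x) ∂(K ω) with hA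
  set B : Ω → ℝ≥0∞ := fun ω => ∫⁻ x, ENNReal.ofReal (-φ x) ∂(K ω) with hB
  have hAmeas : Measurable A := (Measure.measurable_lintegral hφ.ennreal_ofReal).comp hK
  have hBmeas : Measurable B := (Measure.measurable_lintegral hφ.neg.ennreal_ofReal).comp hK
  have hAle : ∀ ω, A ω ≤ ∫⁻ x, (‖φ x‖₊ : ℝ≥0∞) ∂(K ω) := fun ω =>
    lintegral_mono fun x => by
      rw [← enorm_eq_nnnorm, ← ofReal_norm]
      exact ENNReal.ofReal_le_ofReal (le_abs_self _)
  have hBle : ∀ ω, B ω ≤ ∫⁻ x, (‖φ x‖₊ : ℝ≥0∞) ∂(K ω) := fun ω =>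
    lintegral_mono fun x => by
      rw [← enorm_eq_nnnorm, ← ofReal_norm, Real.norm_eq_abs]
      exact ENNReal.ofReal_le_ofReal (neg_le_abs _)
  have hAn : ∫⁻ ω, A ω ∂P < ∞ := lt_of_le_of_lt (lintegral_mono hAle) hFn
  have hBn : ∫⁻ ω, B ω ∂P < ∞ := lt_of_le_of_lt (lintegral_mono hBle) hFn
  have haeA : ∀ᵐ ω ∂P, A ω < ∞ := ae_lt_top hAmeas hAn.ne
  have haeB : ∀ᵐ ω ∂P, B ω < ∞ := ae_lt_top hBmeas hBn.ne
  have hsplit : ∀ᵐ ω ∂P, ∫ x, φ x ∂(K ω) = (A ω).toReal - (B ω).toReal :=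
    haei.mono fun ω hω => integral_eq_lintegral_pos_part_sub_lintegral_neg_part hω
  rw [integral_congr_ae hsplit, integral_sub
    (integrable_toReal_of_lintegral_ne_top hAmeas.aemeasurable hAn.ne)
    (integrable_toReal_of_lintegral_ne_top hBmeas.aemeasurable hBn.ne),
    integral_toReal hAmeas.aemeasurable haeA, integral_toReal hBmeas.aemeasurable haeB,
    integral_eq_lintegral_pos_part_sub_lintegral_neg_part hφi,
    Measure.lintegral_bind hK.aemeasurable hφ.ennreal_ofReal.aemeasurable, Measure.lintegral_bind (f := fun x => ENNReal.ofReal (-φ x)) hK.aemeasurable hφ.neg.ennreal_ofReal.aemeasurable]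

lemma heatFlow_moment {d : ℕ} {t t' : ℝ} (h : t < t') (κ : Measure (Ed d))
    [IsProbabilityMeasure κ] (hκ : ∫⁻ x, ENNReal.ofReal (‖x‖ ^ 2) ∂κ < ∞) :
    ∫⁻ x, ENNReal.ofReal (‖x‖ ^ 2) ∂(heatFlow d t t' κ) < ∞ := by
  haveI := gaussMeasure_fin d (sub_pos.2 h)
  set γ := gaussMeasure d (t' - t)
  have hS : Measurable fun x : Ed d => ENNReal.ofReal (‖x‖ ^ 2) :=
    (measurable_norm.pow measurable_const).ennreal_ofReal
  rw [heatFlow, if_neg (not_le.2 h), lintegral_map (g := fun q : Ed d × Ed d => q.1 + q.2) hS (measurable_fst.add measurable_snd)]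
  have hptw : ∀ q : Ed d × Ed d, ENNReal.ofReal (‖q.1 + q.2‖ ^ 2)
      ≤ 2 * ENNReal.ofReal (‖q.1‖ ^ 2) + 2 * ENNReal.ofReal (‖q.2‖ ^ 2) := by
    intro q
    have hr : ‖q.1 + q.2‖ ^ 2 ≤ 2 * ‖q.1‖ ^ 2 + 2 * ‖q.2‖ ^ 2 := by
      have h1 : ‖q.1 + q.2‖ ≤ ‖q.1‖ + ‖q.2‖ := norm_add_le _ _
      nlinarith [norm_nonneg q.1, norm_nonneg q.2, norm_nonneg (q.1 + q.2),
        sq_nonneg (‖q.1‖ - ‖q.2‖)]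
    calc ENNReal.ofReal (‖q.1 + q.2‖ ^ 2)
        ≤ ENNReal.ofReal (2 * ‖q.1‖ ^ 2 + 2 * ‖q.2‖ ^ 2) := ENNReal.ofReal_le_ofReal hr
      _ = ENNReal.ofReal (2 * ‖q.1‖ ^ 2) + ENNReal.ofReal (2 * ‖q.2‖ ^ 2) :=
          ENNReal.ofReal_add (by positivity) (by positivity)
      _ = 2 * ENNReal.ofReal (‖q.1‖ ^ 2) + 2 * ENNReal.ofReal (‖q.2‖ ^ 2) := by
          rw [ENNReal.ofReal_mul (by norm_num), ENNReal.ofReal_mul (by norm_num)]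
          norm_num
  have hS1 : Measurable fun q : Ed d × Ed d => ENNReal.ofReal (‖q.1‖ ^ 2) :=
    hS.comp measurable_fst
  have hS2 : Measurable fun q : Ed d × Ed d => ENNReal.ofReal (‖q.2‖ ^ 2) :=
    hS.comp measurable_snd
  refine lt_of_le_of_lt (lintegral_mono hptw) ?_
  rw [lintegral_add_left (hS1.const_mul 2)]
  have h1 : ∫⁻ q : Ed d × Ed d, 2 * ENNReal.ofReal (‖q.1‖ ^ 2) ∂(κ.prod γ) < ∞ := by
    rw [lintegral_const_mul 2 hS1, MeasureTheory.lintegral_prod _ hS1.aemeasurable]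
    simp only [lintegral_const]
    rw [lintegral_mul_const _ hS]
    exact ENNReal.mul_lt_top (by norm_num)
      (ENNReal.mul_lt_top hκ (measure_lt_top _ _))
  have h2 : ∫⁻ q : Ed d × Ed d, 2 * ENNReal.ofReal (‖q.2‖ ^ 2) ∂(κ.prod γ) < ∞ := by
    rw [lintegral_const_mul 2 hS2, MeasureTheory.lintegral_prod _ hS2.aemeasurable]
    simp only [lintegral_const, measure_univ, mul_one]
    exact ENNReal.mul_lt_top (by norm_num) (gaussMeasure_moment d (sub_pos.2 h))
  exact ENNReal.add_lt_top.2 ⟨h1, h2⟩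

lemma rpow_two_eq {d : ℕ} : (fun x : Ed d => ‖x‖ ^ (2:ℝ)) = fun x : Ed d => ‖x‖ ^ (2:ℕ) := by
  funext x
  rw [← Real.rpow_natCast ‖x‖ 2]
  norm_num

lemma moment_of_integrable {d : ℕ} {κ : Measure (Ed d)}
    (h : Integrable (fun x => ‖x‖ ^ (2:ℝ)) κ) :
    ∫⁻ x, ENNReal.ofReal (‖x‖ ^ 2) ∂κ < ∞ := by
  rw [rpow_two_eq] at h
  exact h.lintegral_lt_top

/-- Let `(t,m) ∈ [0,T] × 𝒫₂` and `M ∈ 𝓜(t,m)`. Then for every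
`t' ∈ [t,T]` and every bounded continuous `φ`, `E[M_{t'}(φ)] = p^{t,m}_{t'}(φ)`; this
identity extends to all measurable `φ` with at most quadratic growth, and in particular
`M_{t'} ∈ 𝒫₂` almost surely. -/
theorem mvp_mean_identity (d : ℕ) (T t : ℝ) (ht : 0 ≤ t) (htT : t ≤ T)
    (m : Measure (Ed d)) (hm : MemP d 2 m) (X : MVP d T t m) :
    ∀ t' ∈ Set.Icc t T,
      (∀ φ : Ed d →ᵇ ℝ,
        ∫ ω, (∫ x, φ x ∂(X.M t' ω)) ∂X.P = ∫ x, φ x ∂(heatFlow d t t' m)) ∧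
      (∀ φ : Ed d → ℝ, Measurable φ → (∃ c : ℝ, ∀ x, |φ x| ≤ c * (1 + ‖x‖ ^ 2)) →
        ∫ ω, (∫ x, φ x ∂(X.M t' ω)) ∂X.P = ∫ x, φ x ∂(heatFlow d t t' m)) ∧
      (∀ᵐ ω ∂X.P, MemP d 2 (X.M t' ω)) := by
  intro t' ht'
  obtain ⟨ht1, ht2⟩ := ht'
  letI := X.mΩ
  haveI := X.probP
  haveI := hm.1
  have hprob : ∀ ω, IsProbabilityMeasure (X.M t' ω) := fun ω => (X.inP1 t' ⟨ht1, ht2⟩ ω).1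
  have hprobt : ∀ ω, IsProbabilityMeasure (X.M t ω) := fun ω => (X.inP1 t ⟨le_rfl, htT⟩ ω).1
  -- Part 1
  have key1 : ∀ φ : Ed d →ᵇ ℝ,
      ∫ ω, (∫ x, φ x ∂(X.M t' ω)) ∂X.P = ∫ x, φ x ∂(heatFlow d t t' m) := by
    intro φ
    rcases eq_or_lt_of_le ht1 with heq | hlt
    · cases heq
      rw [heatFlow, if_pos le_rfl]
      exact X.init φ
    · obtain ⟨ψ, hψ⟩ := exists_smooth_bcf (sub_pos.2 hlt) φ
      have hle : genFiltration d X.M t t ≤ X.mΩ := by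
        refine le_trans (iInf₂_le (t + 1) (Set.mem_Ioi.2 (lt_add_one t))) ?_
        exact iSup₂_le fun r _ => (X.meas r).comap_le
      have hco := X.cond t t' le_rfl hlt.le ht2 φ
      have h1 : ∫ ω, (X.P[(fun ω => ∫ x, φ x ∂(X.M t' ω)) | genFiltration d X.M t t]) ω ∂X.P
          = ∫ ω, (∫ x, φ x ∂(X.M t' ω)) ∂X.P := integral_condExp hle
      have h2 : ∫ ω, (X.P[(fun ω => ∫ x, φ x ∂(X.M t' ω)) | genFiltration d X.M t t]) ω ∂X.P
          = ∫ ω, (∫ x, φ x ∂(heatFlow d t t' (X.M t ω))) ∂X.P := integral_congr_ae hco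
      have h3 : ∀ ω, ∫ x, φ x ∂(heatFlow d t t' (X.M t ω)) = ∫ x, ψ x ∂(X.M t ω) := by
        intro ω
        haveI := hprobt ω
        rw [heatFlow_integral_bcf hlt]
        exact integral_congr_ae (ae_of_all _ fun x => (hψ x).symm)
      have h5 : ∫ x, ψ x ∂m = ∫ x, φ x ∂(heatFlow d t t' m) := by
        rw [heatFlow_integral_bcf hlt]
        exact integral_congr_ae (ae_of_all _ fun x => hψ x)
      calc ∫ ω, (∫ x, φ x ∂(X.M t' ω)) ∂X.P
          = ∫ ω, (∫ x, φ x ∂(heatFlow d t t' (X.M t ω))) ∂X.P := by rw [← h1, h2]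
        _ = ∫ ω, (∫ x, ψ x ∂(X.M t ω)) ∂X.P := by simp_rw [h3]
        _ = ∫ x, ψ x ∂m := X.init ψ
        _ = ∫ x, φ x ∂(heatFlow d t t' m) := h5
  -- the averaged measure
  set ν : Measure (Ed d) := X.P.bind (X.M t') with hν
  haveI hνprob : IsProbabilityMeasure ν := by
    constructor
    rw [hν, Measure.bind_apply MeasurableSet.univ (X.meas t').aemeasurable]
    rw [lintegral_congr fun ω => (hprob ω).measure_univ]
    simp
  haveI hμfin : IsFiniteMeasure (heatFlow d t t' m) := by
    constructor
    rcases le_or_gt t' t with hle' | hlt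
    · rw [heatFlow, if_pos hle']
      exact measure_lt_top _ _
    · haveI := gaussMeasure_fin d (sub_pos.2 hlt)
      rw [heatFlow, if_neg (not_le.2 hlt),
        Measure.map_apply (f := fun q : Ed d × Ed d => q.1 + q.2) (measurable_fst.add measurable_snd) MeasurableSet.univ]
      exact measure_lt_top _ _
  have hμ2 : ∫⁻ x, ENNReal.ofReal (‖x‖ ^ 2) ∂(heatFlow d t t' m) < ∞ := by
    rcases le_or_gt t' t with hle' | hlt
    · rw [heatFlow, if_pos hle']
      exact moment_of_integrable hm.2
    · exact heatFlow_moment hlt m (moment_of_integrable hm.2)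
  have hνμ : ν = heatFlow d t t' m := by
    refine ext_of_forall_lintegral_eq_of_IsFiniteMeasure fun f => ?_
    set g : Ed d →ᵇ ℝ := BoundedContinuousFunction.ofNormedAddCommGroup
      (fun x => (f x : ℝ)) (NNReal.continuous_coe.comp f.continuous)
      (nndist 0 f) (fun x => by
        rw [Real.norm_eq_abs, abs_of_nonneg (f x).coe_nonneg]
        exact_mod_cast f.apply_le_nndist_zero x) with hg
    have hgint : ∫⁻ x, (‖g x‖₊ : ℝ≥0∞) ∂ν < ∞ :=
      lt_of_le_of_lt (g.lintegral_nnnorm_le ν)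
        (ENNReal.mul_lt_top ENNReal.coe_lt_top (measure_lt_top _ _))
    have hb := integral_bind_real X.P (X.meas t') g.continuous.measurable hgint
    have hgeq : ∀ ρ : Measure (Ed d), ∫ x, g x ∂ρ = ∫ x, (f x : ℝ) ∂ρ := fun ρ => rfl
    have h1 : (∫⁻ x, (f x : ℝ≥0∞) ∂ν) ≠ ∞ := (f.lintegral_lt_top_of_nnreal ν).ne
    have h2 : (∫⁻ x, (f x : ℝ≥0∞) ∂(heatFlow d t t' m)) ≠ ∞ :=
      (f.lintegral_lt_top_of_nnreal _).ne
    rw [← ENNReal.toReal_eq_toReal_iff' h1 h2,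
      BoundedContinuousFunction.toReal_lintegral_coe_eq_integral,
      BoundedContinuousFunction.toReal_lintegral_coe_eq_integral]
    rw [← hgeq, ← hgeq, ← hb]
    exact key1 g
  refine ⟨key1, ?_, ?_⟩
  · -- Part 2 : quadratic growth
    rintro φ hφm ⟨c, hc⟩
    have hcnn : 0 ≤ c := by
      have h0 := hc 0
      have : ‖(0 : Ed d)‖ = 0 := norm_zero
      rw [this] at h0
      norm_num at h0
      linarith [abs_nonneg (φ 0)]
    have hfin : ∫⁻ x, (‖φ x‖₊ : ℝ≥0∞) ∂ν < ∞ := by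
      rw [hνμ]
      have hS : Measurable fun x : Ed d => ENNReal.ofReal (‖x‖ ^ 2) :=
        (measurable_norm.pow measurable_const).ennreal_ofReal
      calc ∫⁻ x, (‖φ x‖₊ : ℝ≥0∞) ∂(heatFlow d t t' m)
          ≤ ∫⁻ x, ENNReal.ofReal c * (1 + ENNReal.ofReal (‖x‖ ^ 2))
              ∂(heatFlow d t t' m) := by
            refine lintegral_mono fun x => ?_
            rw [← enorm_eq_nnnorm, ← ofReal_norm, Real.norm_eq_abs]
            calc ENNReal.ofReal |φ x| ≤ ENNReal.ofReal (c * (1 + ‖x‖ ^ 2)) :=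
                  ENNReal.ofReal_le_ofReal (hc x)
              _ = ENNReal.ofReal c * ENNReal.ofReal (1 + ‖x‖ ^ 2) :=
                  ENNReal.ofReal_mul hcnn
              _ = ENNReal.ofReal c * (1 + ENNReal.ofReal (‖x‖ ^ 2)) := by
                  rw [ENNReal.ofReal_add (by norm_num) (by positivity), ENNReal.ofReal_one]
        _ = ENNReal.ofReal c * ((heatFlow d t t' m) Set.univ
              + ∫⁻ x, ENNReal.ofReal (‖x‖ ^ 2) ∂(heatFlow d t t' m)) := by
            rw [lintegral_const_mul _ (f := fun x : Ed d => (1:ℝ≥0∞) + ENNReal.ofReal (‖x‖ ^ 2)) (measurable_const.add hS),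
              lintegral_add_left measurable_const, lintegral_one]
        _ < ∞ := ENNReal.mul_lt_top ENNReal.ofReal_lt_top
            (ENNReal.add_lt_top.2 ⟨measure_lt_top _ _, hμ2⟩)
    have hb := integral_bind_real X.P (X.meas t') hφm hfin
    rw [hb, ← hν, hνμ]
  · -- Part 3 : second moments a.s.
    have hS : Measurable fun x : Ed d => ENNReal.ofReal (‖x‖ ^ 2) :=
      (measurable_norm.pow measurable_const).ennreal_ofReal
    have hb : ∫⁻ ω, (∫⁻ x, ENNReal.ofReal (‖x‖ ^ 2) ∂(X.M t' ω)) ∂X.P < ∞ := by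
      rw [← Measure.lintegral_bind (X.meas t').aemeasurable hS.aemeasurable, ← hν, hνμ]
      exact hμ2
    have hae : ∀ᵐ ω ∂X.P, (∫⁻ x, ENNReal.ofReal (‖x‖ ^ 2) ∂(X.M t' ω)) < ∞ :=
      ae_lt_top ((Measure.measurable_lintegral hS).comp (X.meas t')) hb.ne
    refine hae.mono fun ω hω => ⟨hprob ω, ?_⟩
    rw [rpow_two_eq]
    refine ⟨(measurable_norm.pow measurable_const).aestronglyMeasurable, ?_⟩
    refine (hasFiniteIntegral_def _ _).mpr ?_
    have heq : ∫⁻ x, (‖(‖x‖ ^ 2 : ℝ)‖₊ : ℝ≥0∞) ∂(X.M t' ω)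
        = ∫⁻ x, ENNReal.ofReal (‖x‖ ^ 2) ∂(X.M t' ω) :=
      lintegral_congr fun x => by
        rw [← enorm_eq_nnnorm, ← ofReal_norm, norm_pow, norm_norm]
    refine heq.trans_lt ?_
    exact hω

end
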